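/- Let G be a graph and B a PSD forcing set of size k. Let C_1,…,C_m be the components of G − B, indexed so that pt_+(G[V(C_i) ∪ B]; B) is nondecreasing in i (with the convention C_1 = ∅ and C_2 = G − B if G − B is connected). If pt_+(G;B) = pt_+(G,k) (i.e., B is k-efficient), then pt_+(G[V(C_m) ∪ B]; B) − pt_+(G[V(C_{m−1}) ∪ B]; B) ≤ 1. -/

import Mathlib

open SimpleGraph Set

variable {V : Type*}

/-- The subgraph of `G` obtained by deleting the vertices of `B`
(kept as isolated vertices). -/
def delVerts (G : SimpleGraph V) (B : Set V) : SimpleGraph V where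
  Adj a b := G.Adj a b ∧ a ∉ B ∧ b ∉ B
  symm := ⟨fun _ _ ⟨h, ha, hb⟩ => ⟨h.symm, hb, ha⟩⟩
  loopless := ⟨fun _ ⟨h, _, _⟩ => G.irrefl h⟩

/-- `u` may PSD-force `w` when the set of blue vertices is `B`:  `u` is blue, `w` is a white
neighbor of `u`, and `w` is the unique white neighbor of `u` in the component of `G - B`
containing `w`. -/
def PSDForce (G : SimpleGraph V) (B : Set V) (u w : V) : Prop :=
  u ∈ B ∧ w ∉ B ∧ G.Adj u w ∧
    ∀ x, G.Adj u x → x ∉ B → (delVerts G B).Reachable x w → x = w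

/-- One round of simultaneous PSD forcing starting from blue set `B`. -/
def psdStep (G : SimpleGraph V) (B : Set V) : Set V :=
  B ∪ {w | ∃ u, PSDForce G B u w}

/-- `B` is a PSD forcing set of `G`. -/
def IsPSDForcingSet (G : SimpleGraph V) (B : Set V) : Prop :=
  ∃ t, (psdStep G)^[t] B = Set.univ

/-- The PSD propagation time `pt_+(G; B)` of the set `B` in `G`. -/
noncomputable def psdPropTime (G : SimpleGraph V) (B : Set V) : ℕ :=
  sInf {t | (psdStep G)^[t] B = Set.univ}

/-- The PSD zero forcing number `Z_+(G)`. -/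
noncomputable def psdZ (G : SimpleGraph V) : ℕ :=
  sInf {k | ∃ B : Set V, IsPSDForcingSet G B ∧ B.ncard = k}

/-- The `k`-PSD propagation time `pt_+(G, k)`: the minimum of `pt_+(G; B)` over
PSD forcing sets `B` of size `k`. -/
noncomputable def psdPt (G : SimpleGraph V) (k : ℕ) : ℕ :=
  sInf {t | ∃ B : Set V, IsPSDForcingSet G B ∧ B.ncard = k ∧ psdPropTime G B = t}

/-- The PSD propagation time `pt_+(G) = pt_+(G, Z_+(G))`. -/
noncomputable def psdPtG (G : SimpleGraph V) : ℕ := psdPt G (psdZ G)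

/-- The PSD propagation time of `B` within the induced subgraph `G[U]` (for `B ⊆ U`),
realized by making the vertices outside `U` isolated and initially blue. -/
noncomputable def psdPropTimeOn (G : SimpleGraph V) (U B : Set V) : ℕ :=
  psdPropTime (delVerts G Uᶜ) (B ∪ Uᶜ)

/-- The vertex set of the component of `G - B` containing the white vertex `w`. -/
def compOf (G : SimpleGraph V) (B : Set V) (w : V) : Set V :=
  {x | x ∉ B ∧ (delVerts G B).Reachable x w}

section Helpers

variable {V : Type*}

lemma subset_psdStep (G : SimpleGraph V) (A : Set V) : A ⊆ psdStep G A :=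
  Set.subset_union_left

lemma mem_psdStep_cases {G : SimpleGraph V} {A : Set V} {w : V}
    (h : w ∈ psdStep G A) : w ∈ A ∨ ∃ u, PSDForce G A u w := h

lemma psdStep_mono (G : SimpleGraph V) {A A' : Set V} (h : A ⊆ A') :
    psdStep G A ⊆ psdStep G A' := by
  rintro w hw
  rcases hw with hw | ⟨u, hu, hwB, hadj, huniq⟩
  · exact Or.inl (h hw)
  by_cases hw' : w ∈ A'
  · exact Or.inl hw'
  refine Or.inr ⟨u, h hu, hw', hadj, fun x hx hxA' hreach => ?_⟩
  refine huniq x hx (fun hxA => hxA' (h hxA)) ?_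
  refine hreach.mono ?_
  intro a b hab
  obtain ⟨h1, h2, h3⟩ := hab
  exact ⟨h1, fun h' => h2 (h h'), fun h' => h3 (h h')⟩

lemma subset_iterate (G : SimpleGraph V) (A : Set V) (n : ℕ) :
    A ⊆ (psdStep G)^[n] A := by
  induction n with
  | zero => simp
  | succ n ih =>
      rw [Function.iterate_succ_apply']
      exact ih.trans (subset_psdStep G _)

lemma iterate_mono_idx (G : SimpleGraph V) (A : Set V) {m n : ℕ} (h : m ≤ n) :
    (psdStep G)^[m] A ⊆ (psdStep G)^[n] A := by
  obtain ⟨r, rfl⟩ := Nat.exists_eq_add_of_le h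
  rw [add_comm, Function.iterate_add_apply]
  exact subset_iterate G _ r

lemma iterate_mono_set (G : SimpleGraph V) {A A' : Set V} (h : A ⊆ A') (n : ℕ) :
    (psdStep G)^[n] A ⊆ (psdStep G)^[n] A' := by
  induction n with
  | zero => simpa
  | succ n ih =>
      rw [Function.iterate_succ_apply', Function.iterate_succ_apply']
      exact psdStep_mono G ih

lemma walk_lift {G₁ H : SimpleGraph V} {P : V → Prop}
    (hP : ∀ a b, G₁.Adj a b → P a → P b ∧ H.Adj a b) :
    ∀ {x y : V}, G₁.Walk x y → P x → P y ∧ H.Reachable x y := by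
  intro x y wlk
  induction wlk with
  | nil => exact fun hx => ⟨hx, SimpleGraph.Reachable.refl _⟩
  | cons hadj rest ih =>
      intro hx
      obtain ⟨hPb, hHadj⟩ := hP _ _ hadj hx
      obtain ⟨hPy, hr⟩ := ih hPb
      exact ⟨hPy, hHadj.reachable.trans hr⟩

lemma reach_lift {G₁ H : SimpleGraph V} {P : V → Prop}
    (hP : ∀ a b, G₁.Adj a b → P a → P b ∧ H.Adj a b) {x y : V}
    (h : G₁.Reachable x y) (hx : P x) : P y ∧ H.Reachable x y := by
  obtain ⟨wlk⟩ := h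
  exact walk_lift hP wlk hx

end Helpers

section Sim

variable {V : Type*}

lemma sim_forward (G : SimpleGraph V) (B C : Set V)
    (hcl : ∀ a ∈ C, ∀ b, G.Adj a b → b ∉ B → b ∈ C) (t : ℕ) :
    ((psdStep (delVerts G (C ∪ B)ᶜ))^[t] (B ∪ (C ∪ B)ᶜ)) ∩ C ⊆ (psdStep G)^[t] B := by
  induction t with
  | zero =>
      rintro x ⟨hx, hxC⟩
      simp only [Function.iterate_zero, id] at hx ⊢
      rcases hx with hx | hx
      · exact hx
      · exact absurd (Or.inl hxC : x ∈ C ∪ B) hx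
  | succ t ih =>
      set G' := delVerts G (C ∪ B)ᶜ with hG'
      set A' := (psdStep G')^[t] (B ∪ (C ∪ B)ᶜ) with hA'
      set A := (psdStep G)^[t] B with hA
      rw [Function.iterate_succ_apply', Function.iterate_succ_apply']
      rintro w₁ ⟨hw₁, hw₁C⟩
      rcases mem_psdStep_cases hw₁ with hw₁A' | ⟨u, hu, hw₁A', hadj', huniq'⟩
      · exact subset_psdStep G A (ih ⟨hw₁A', hw₁C⟩)
      by_cases hw₁A : w₁ ∈ A
      · exact subset_psdStep G A hw₁A
      obtain ⟨hGadj, huU, hw₁U⟩ := hadj'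
      have huU' : u ∈ C ∪ B := Set.notMem_compl_iff.mp huU
      have huA : u ∈ A := by
        rcases huU' with h | h
        · exact ih ⟨hu, h⟩
        · exact subset_iterate G B t h
      refine Or.inr ⟨u, huA, hw₁A, hGadj, ?_⟩
      intro x hx hxA hreach
      have hBA : B ⊆ A := subset_iterate G B t
      have hP : ∀ a b, (delVerts G A).Adj a b →
          (a ∈ C ∧ a ∉ A ∧ a ∉ A') →
          (b ∈ C ∧ b ∉ A ∧ b ∉ A') ∧ (delVerts G' A').Adj a b := by
        intro a b hab ha
        obtain ⟨hG1, haA, hbA⟩ := hab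
        obtain ⟨haC, -, haA'⟩ := ha
        have hbB : b ∉ B := fun h => hbA (hBA h)
        have hbC : b ∈ C := hcl a haC b hG1 hbB
        have hbA' : b ∉ A' := fun h => hbA (ih ⟨h, hbC⟩)
        exact ⟨⟨hbC, hbA, hbA'⟩, ⟨⟨hG1, fun h => h (Or.inl haC), fun h => h (Or.inl hbC)⟩, haA', hbA'⟩⟩
      obtain ⟨⟨hxC, -, hxA'⟩, hr'⟩ :=
        reach_lift hP hreach.symm ⟨hw₁C, hw₁A, hw₁A'⟩
      exact huniq' x ⟨hx, huU, fun h => h (Or.inl hxC)⟩ hxA' hr'.symm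

lemma sim_backward (G : SimpleGraph V) (B C : Set V)
    (hcl : ∀ a ∈ C, ∀ b, G.Adj a b → b ∉ B → b ∈ C) (t : ℕ) :
    ((psdStep G)^[t] B) ∩ C ⊆ ((psdStep (delVerts G (C ∪ B)ᶜ))^[t] (B ∪ (C ∪ B)ᶜ)) := by
  induction t with
  | zero =>
      rintro x ⟨hx, hxC⟩
      simp only [Function.iterate_zero, id] at hx ⊢
      exact Or.inl hx
  | succ t ih =>
      set G' := delVerts G (C ∪ B)ᶜ with hG'
      set A' := (psdStep G')^[t] (B ∪ (C ∪ B)ᶜ) with hA'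
      set A := (psdStep G)^[t] B with hA
      rw [Function.iterate_succ_apply', Function.iterate_succ_apply']
      rintro w₁ ⟨hw₁, hw₁C⟩
      by_cases hw₁A' : w₁ ∈ A'
      · exact subset_psdStep G' A' hw₁A'
      have hw₁A : w₁ ∉ A := fun h => hw₁A' (ih ⟨h, hw₁C⟩)
      rcases mem_psdStep_cases hw₁ with h | ⟨u, huA, hw₁A2, hadj, huniq⟩
      · exact absurd h hw₁A
      have hBA' : B ∪ (C ∪ B)ᶜ ⊆ A' := subset_iterate G' _ t
      have huA' : u ∈ A' := by
        by_cases huB : u ∈ B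
        · exact hBA' (Or.inl huB)
        · exact ih ⟨huA, hcl w₁ hw₁C u hadj.symm huB⟩
      have huU : u ∉ (C ∪ B)ᶜ := by
        by_cases huB : u ∈ B
        · exact fun h => h (Or.inr huB)
        · exact fun h => h (Or.inl (hcl w₁ hw₁C u hadj.symm huB))
      have hw₁U : w₁ ∉ (C ∪ B)ᶜ := fun h => h (Or.inl hw₁C)
      refine Or.inr ⟨u, huA', hw₁A', ⟨hadj, huU, hw₁U⟩, ?_⟩
      intro x hx' hxA' hreach'
      obtain ⟨hGux, -, hxU⟩ := hx'
      have hP : ∀ a b, (delVerts G' A').Adj a b →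
          (a ∈ C ∧ a ∉ A' ∧ a ∉ A) →
          (b ∈ C ∧ b ∉ A' ∧ b ∉ A) ∧ (delVerts G A).Adj a b := by
        intro a b hab ha
        obtain ⟨hab1, haA'2, hbA'⟩ := hab
        obtain ⟨hG1, haU, hbU⟩ := hab1
        obtain ⟨haC, -, haA⟩ := ha
        have hbCB : b ∈ C ∪ B := Set.notMem_compl_iff.mp hbU
        have hbC : b ∈ C := by
          rcases hbCB with h | h
          · exact h
          · exact absurd (hBA' (Or.inl h)) hbA'
        have hbA : b ∉ A := fun h => hbA' (ih ⟨h, hbC⟩)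
        exact ⟨⟨hbC, hbA', hbA⟩, ⟨hG1, haA, hbA⟩⟩
      obtain ⟨⟨hxC, -, hxA⟩, hr⟩ :=
        reach_lift hP hreach'.symm ⟨hw₁C, hw₁A', hw₁A⟩
      exact huniq x hGux hxA hr.symm

end Sim

/-- if `B` is a `k`-efficient PSD forcing set, then the largest component
propagation time exceeds the second largest by at most one.  Equivalently (the form stated
here): for every component `C` of `G - B` (say the component of a white vertex `w`),
`pt_+(G;B)` is at most one more than the maximum of `pt_+(G[V(C') ∪ B]; B)` over the
components `C'` of `G - B` different from `C` (the empty maximum being `0`, which encodes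
the convention `C₁ = ∅` when `G - B` is connected). -/
theorem stmt10 [Fintype V] (G : SimpleGraph V) (B : Set V) (k : ℕ)
    (hB : IsPSDForcingSet G B) (hk : B.ncard = k)
    (heff : psdPropTime G B = psdPt G k) :
    ∀ w ∉ B, psdPropTime G B ≤
      sSup ((fun w' => psdPropTimeOn G (compOf G B w' ∪ B) B) ''
        {w' | w' ∉ B ∧ ¬ (delVerts G B).Reachable w' w}) + 1 := by
  classical
  intro w hw
  by_contra hgt
  push_neg at hgt
  set p := sSup ((fun w' => psdPropTimeOn G (compOf G B w' ∪ B) B) ''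
      {w' | w' ∉ B ∧ ¬ (delVerts G B).Reachable w' w}) with hp
  set T := psdPropTime G B with hT
  -- hgt : p + 1 < T
  set S : ℕ → Set V := fun t => (psdStep G)^[t] B with hSdef
  have hSsucc : ∀ t, S (t + 1) = psdStep G (S t) := fun t =>
    Function.iterate_succ_apply' _ _ _
  have hS1 : S 1 = psdStep G B := hSsucc 0
  have hBS : ∀ t, B ⊆ S t := fun t => subset_iterate G B t
  have hSmono : ∀ {m n : ℕ}, m ≤ n → S m ⊆ S n := fun h => iterate_mono_idx G B h
  have hTne : {t | (psdStep G)^[t] B = Set.univ}.Nonempty := hB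
  have hSTuniv : S T = Set.univ := Nat.sInf_mem hTne
  -- the component of w
  set Cm : Set V := compOf G B w with hCmdef
  have hCmB : ∀ x ∈ Cm, x ∉ B := fun x hx => hx.1
  have hCmcl : ∀ a ∈ Cm, ∀ b, G.Adj a b → b ∉ B → b ∈ Cm := by
    intro a ha b hab hbB
    exact ⟨hbB, (SimpleGraph.Adj.reachable (G := delVerts G B) ⟨hab.symm, hbB, ha.1⟩).trans ha.2⟩
  -- other components are done by time p
  have hothers : ∀ z, z ∉ B → ¬ (delVerts G B).Reachable z w → z ∈ S p := by
    intro z hzB hzw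
    set C := compOf G B z with hC
    have hcl : ∀ a ∈ C, ∀ b, G.Adj a b → b ∉ B → b ∈ C := by
      intro a ha b hab hbB
      exact ⟨hbB, (SimpleGraph.Adj.reachable (G := delVerts G B) ⟨hab.symm, hbB, ha.1⟩).trans ha.2⟩
    set G' := delVerts G (C ∪ B)ᶜ with hG'
    set A₀ := B ∪ (C ∪ B)ᶜ with hA₀
    have hforce' : (psdStep G')^[T] A₀ = Set.univ := by
      apply Set.eq_univ_of_forall
      intro x
      by_cases hxB : x ∈ B
      · exact subset_iterate G' A₀ T (Or.inl hxB)
      by_cases hxU : x ∈ C ∪ B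
      · have hxC : x ∈ C := hxU.resolve_right hxB
        exact sim_backward G B C hcl T ⟨by rw [show (psdStep G)^[T] B = S T from rfl, hSTuniv]; trivial, hxC⟩
      · exact subset_iterate G' A₀ T (Or.inr hxU)
    have htzmem : (psdStep G')^[psdPropTime G' A₀] A₀ = Set.univ :=
      Nat.sInf_mem (s := {t | (psdStep G')^[t] A₀ = Set.univ}) ⟨T, hforce'⟩
    have hzC : z ∈ C := ⟨hzB, SimpleGraph.Reachable.refl z⟩
    have hzS : z ∈ S (psdPropTime G' A₀) :=
      sim_forward G B C hcl (psdPropTime G' A₀) ⟨by rw [htzmem]; trivial, hzC⟩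
    have hle : psdPropTime G' A₀ ≤ p := by
      rw [hp]
      refine le_csSup ((Set.toFinite _).bddAbove) ?_
      exact ⟨z, ⟨hzB, hzw⟩, rfl⟩
    exact hSmono hle hzS
  -- first-round forced vertices in Cm, and their forcers
  set F₁ : Set V := S 1 ∩ Cm with hF₁def
  have hF₁Cm : F₁ ⊆ Cm := Set.inter_subset_right
  have hF₁S : ∀ t, 1 ≤ t → F₁ ⊆ S t := fun t ht =>
    Set.inter_subset_left.trans (hSmono ht)
  have hvforce : ∀ v, ∃ u, v ∈ F₁ → PSDForce G B u v := by
    intro v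
    by_cases hv : v ∈ F₁
    · obtain ⟨h1, h2⟩ := hv
      rw [hS1] at h1
      rcases mem_psdStep_cases h1 with h | ⟨u, hu⟩
      · exact absurd h h2.1
      · exact ⟨u, fun _ => hu⟩
    · exact ⟨w, fun h => absurd h hv⟩
  choose uf huf using hvforce
  have key1 : ∀ v ∈ F₁, ∀ z ∈ Cm, G.Adj (uf v) z → z = v := by
    intro v hv z hz hadj
    have hforce := huf v hv
    refine hforce.2.2.2 z hadj hz.1 ?_
    exact hz.2.trans ((hF₁Cm hv).2).symm
  set U₁ : Set V := uf '' F₁ with hU₁def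
  have hU₁B : U₁ ⊆ B := by
    rintro x ⟨v, hv, rfl⟩
    exact (huf v hv).1
  have hinj : Set.InjOn uf F₁ := by
    intro v hv v' hv' he
    have hadj : G.Adj (uf v) v' := by
      rw [he]; exact (huf v' hv').2.2.1
    exact (key1 v hv v' (hF₁Cm hv') hadj).symm
  set B' : Set V := (B \ U₁) ∪ F₁ with hB'def
  -- closure lemma
  have clos : ∀ t, 1 ≤ t → ∀ A : Set V, (B \ U₁) ∪ (S t ∩ Cm) ⊆ A →
      ∀ x y, x ∈ Cm → x ∉ S t → (delVerts G A).Reachable x y →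
        (y ∈ Cm ∧ y ∉ S t) ∧ (delVerts G (S t)).Reachable x y := by
    intro t ht A hsub x y hxCm hxS hreach
    refine reach_lift (P := fun y => y ∈ Cm ∧ y ∉ S t) (H := delVerts G (S t)) ?_ hreach ⟨hxCm, hxS⟩
    rintro a b hab ha
    obtain ⟨hG1, haA, hbA⟩ := hab
    obtain ⟨haCm, haS⟩ := ha
    have hbU₁ : b ∉ U₁ := by
      rintro ⟨v', hv', rfl⟩
      have hav : a = v' := key1 v' hv' a haCm hG1.symm
      exact haS (hF₁S t ht (hav ▸ hv'))
    have hbB : b ∉ B := fun h => hbA (hsub (Or.inl ⟨h, hbU₁⟩))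
    have hbCm : b ∈ Cm := hCmcl a haCm b hG1 hbB
    have hbS : b ∉ S t := fun h => hbA (hsub (Or.inr ⟨h, hbCm⟩))
    exact ⟨⟨hbCm, hbS⟩, hG1, haS, hbS⟩
  have hB'sub : (B \ U₁) ∪ (S 1 ∩ Cm) ⊆ B' := by rw [hB'def, hF₁def]
  -- round 1 from B' recovers U₁
  have hU₁step : U₁ ⊆ psdStep G B' := by
    rintro x ⟨v, hv, rfl⟩
    have hufvB : uf v ∈ B := (huf v hv).1
    have hufvB' : uf v ∉ B' := by
      rintro (⟨-, hU⟩ | hF)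
      · exact hU ⟨v, hv, rfl⟩
      · exact (hF₁Cm hF).1 hufvB
    refine Or.inr ⟨v, Or.inr hv, hufvB', (huf v hv).2.2.1.symm, ?_⟩
    intro x hx hxB' hreach
    by_cases hxB : x ∈ B
    · have hxU₁ : x ∈ U₁ := by
        by_contra hxU
        exact hxB' (Or.inl ⟨hxB, hxU⟩)
      obtain ⟨v'', hv'', rfl⟩ := hxU₁
      have hvv : v = v'' := key1 v'' hv'' v (hF₁Cm hv) hx.symm
      rw [hvv]
    · have hxCm : x ∈ Cm := hCmcl v (hF₁Cm hv) x hx hxB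
      have hxS1 : x ∉ S 1 := fun hxS => hxB' (Or.inr ⟨hxS, hxCm⟩)
      have hres := (clos 1 le_rfl B' hB'sub x (uf v) hxCm hxS1 hreach).1
      exact absurd hufvB hres.1.1
  -- forcing lemma for Cm
  have hlemD : ∀ t, 1 ≤ t → ∀ A : Set V, (B \ U₁) ∪ (S t ∩ Cm) ⊆ A →
      S (t + 1) ∩ Cm ⊆ psdStep G A := by
    rintro t ht A hsub w₁ ⟨hw₁S, hw₁Cm⟩
    by_cases hw₁A : w₁ ∈ A
    · exact Or.inl hw₁A
    have hw₁St : w₁ ∉ S t := fun h => hw₁A (hsub (Or.inr ⟨h, hw₁Cm⟩))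
    rw [hSsucc t] at hw₁S
    rcases mem_psdStep_cases hw₁S with h | ⟨u₂, hu₂, hw₁2, hadj, huniq⟩
    · exact absurd h hw₁St
    have hu₂A : u₂ ∈ A := by
      by_cases hu₂B : u₂ ∈ B
      · by_cases hu₂U : u₂ ∈ U₁
        · obtain ⟨v', hv', rfl⟩ := hu₂U
          have hwv : w₁ = v' := key1 v' hv' w₁ hw₁Cm hadj
          exact absurd (hF₁S t ht (hwv ▸ hv')) hw₁St
        · exact hsub (Or.inl ⟨hu₂B, hu₂U⟩)
      · have hu₂Cm : u₂ ∈ Cm := hCmcl w₁ hw₁Cm u₂ hadj.symm hu₂B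
        exact hsub (Or.inr ⟨hu₂, hu₂Cm⟩)
    refine Or.inr ⟨u₂, hu₂A, hw₁A, hadj, ?_⟩
    intro x hx hxA hreach
    obtain ⟨⟨hxCm, hxS⟩, hr⟩ := clos t ht A hsub w₁ x hw₁Cm hw₁St hreach.symm
    exact huniq x hx hxS hr.symm
  -- main induction on Cm
  set S' : ℕ → Set V := fun t => (psdStep G)^[t] B' with hS'def
  have hS'succ : ∀ t, S' (t + 1) = psdStep G (S' t) := fun t =>
    Function.iterate_succ_apply' _ _ _
  have hB'S' : ∀ t, B' ⊆ S' t := fun t => subset_iterate G B' t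
  have hS'mono : ∀ {m n : ℕ}, m ≤ n → S' m ⊆ S' n := fun h => iterate_mono_idx G B' h
  have hBS'1 : B ⊆ S' 1 := by
    intro x hxB
    by_cases hxU : x ∈ U₁
    · exact (hS'succ 0) ▸ hU₁step hxU
    · exact hB'S' 1 (Or.inl ⟨hxB, hxU⟩)
  have hmain : ∀ n, B ∪ F₁ ∪ (S (n + 2) ∩ Cm) ⊆ S' (n + 1) := by
    intro n
    induction n with
    | zero =>
        rw [hS'succ 0]
        refine Set.union_subset (Set.union_subset ?_ ?_) ?_
        · intro x hxB
          by_cases hxU : x ∈ U₁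
          · exact hU₁step hxU
          · exact subset_psdStep G B' (Or.inl ⟨hxB, hxU⟩)
        · exact (Set.subset_union_right).trans (subset_psdStep G B')
        · exact hlemD 1 le_rfl B' hB'sub
    | succ n ih =>
        rw [hS'succ (n + 1)]
        refine Set.union_subset (Set.union_subset ?_ ?_) ?_
        · intro x hx
          exact subset_psdStep G _ (ih (Or.inl (Or.inl hx)))
        · intro x hx
          exact subset_psdStep G _ (ih (Or.inl (Or.inr hx)))
        · refine hlemD (n + 2) (by omega) (S' (n + 1)) ?_
          refine Set.union_subset ?_ ?_
          · intro x hx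
            exact ih (Or.inl (Or.inl hx.1))
          · intro x hx
            exact ih (Or.inr hx)
  -- wrap up
  have hp2T : p + 2 ≤ T := by omega
  obtain ⟨q, hq⟩ := Nat.exists_eq_add_of_le hp2T
  have hCmdone : Cm ⊆ S' (p + q + 1) := by
    intro x hx
    have hSu : S (p + q + 2) = Set.univ := by
      rw [show p + q + 2 = T by omega]
      exact hSTuniv
    exact hmain (p + q) (Or.inr ⟨by rw [hSu]; trivial, hx⟩)
  have hothers' : ∀ z, z ∉ B → ¬ (delVerts G B).Reachable z w → z ∈ S' (p + q + 1) := by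
    intro z h1 h2
    have hz : z ∈ S p := hothers z h1 h2
    have h4 : S' (p + 1) = (psdStep G)^[p] (S' 1) := Function.iterate_add_apply _ p 1 B'
    have hz' : z ∈ S' (p + 1) := by
      rw [h4]
      exact iterate_mono_set G hBS'1 p hz
    exact hS'mono (by omega) hz'
  have huniv : S' (p + q + 1) = Set.univ := by
    apply Set.eq_univ_of_forall
    intro x
    by_cases hxB : x ∈ B
    · exact hS'mono (by omega : 1 ≤ p + q + 1) (hBS'1 hxB)
    by_cases hr : (delVerts G B).Reachable x w
    · exact hCmdone ⟨hxB, hr⟩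
    · exact hothers' x hxB hr
  have hfor : IsPSDForcingSet G B' := ⟨p + q + 1, huniv⟩
  have hupper : psdPropTime G B' ≤ p + q + 1 :=
    Nat.sInf_le (show p + q + 1 ∈ {t | (psdStep G)^[t] B' = Set.univ} from huniv)
  have hdisj : Disjoint (B \ U₁) F₁ := by
    rw [Set.disjoint_right]
    intro a haF haB
    exact (hF₁Cm haF).1 haB.1
  have hcard1 : B'.ncard = (B \ U₁).ncard + F₁.ncard :=
    Set.ncard_union_eq hdisj (Set.toFinite _) (Set.toFinite _)
  have hcard2 : (B \ U₁).ncard = B.ncard - U₁.ncard :=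
    Set.ncard_diff hU₁B (Set.toFinite _)
  have hcard3 : U₁.ncard = F₁.ncard := Set.ncard_image_of_injOn hinj
  have hcard4 : U₁.ncard ≤ B.ncard := Set.ncard_le_ncard hU₁B (Set.toFinite _)
  have hncard : B'.ncard = k := by omega
  have hPt : psdPt G k ≤ psdPropTime G B' :=
    Nat.sInf_le (show psdPropTime G B' ∈
      {t | ∃ B₂ : Set V, IsPSDForcingSet G B₂ ∧ B₂.ncard = k ∧ psdPropTime G B₂ = t} from
      ⟨B', hfor, hncard, rfl⟩)
  omega
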